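/- Fix p > 1, λ > 1, and set c = (λ^p - 1)/(λ^p - λ) and B(x,y,z) = z^p + c·max(y - x z^{p-1}, 0). Let z > 0, let weights α_i ≥ 0 sum to 1, and let x_i ≥ 0, y_i ≥ 0 satisfy x_i ≤ λ · x where x = Σ α_i x_i, y = Σ α_i y_i, and x ≤ z. Then B(x, y, z) ≤ Σ α_i B(x_i, y_i, max(x_i, z)). -/

import Mathlib

private lemma key_pt (p lam : ℝ) (hp : 1 < p) (hlam : 1 < lam) (z t : ℝ) (hz : 0 < z)
    (ht0 : 0 ≤ t) (htl : t ≤ lam * z) :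
    z ^ p + ((lam ^ p - 1) / (lam ^ p - lam)) * (t * (max t z) ^ (p - 1)) ≤
      (max t z) ^ p + ((lam ^ p - 1) / (lam ^ p - lam)) * (t * z ^ (p - 1)) := by
  have hlam0 : (0:ℝ) < lam := by linarith
  have hlp : lam < lam ^ p := by
    have h := (Real.rpow_lt_rpow_left_iff hlam).2 hp
    rwa [Real.rpow_one] at h
  have hD : (0:ℝ) < lam ^ p - lam := by linarith
  set c : ℝ := (lam ^ p - 1) / (lam ^ p - lam) with hc
  have hcD : c * (lam ^ p - lam) = lam ^ p - 1 := by
    rw [hc]; field_simp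
  rcases le_or_gt t z with h | h
  · rw [max_eq_right h]
  · rw [max_eq_left h.le]
    have ht : 0 < t := lt_trans hz h
    have htp : t * t ^ (p - 1) = t ^ p := by
      have h2 := Real.rpow_add ht 1 (p - 1)
      rw [Real.rpow_one, show (1:ℝ) + (p - 1) = p by ring] at h2
      exact h2.symm
    have hzp : z * z ^ (p - 1) = z ^ p := by
      have h2 := Real.rpow_add hz 1 (p - 1)
      rw [Real.rpow_one, show (1:ℝ) + (p - 1) = p by ring] at h2
      exact h2.symm
    have hden : (0:ℝ) < lam * z - z := by nlinarith
    have ha0 : 0 ≤ (lam * z - t) / (lam * z - z) := div_nonneg (by linarith) hden.le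
    have hb0 : 0 ≤ (t - z) / (lam * z - z) := div_nonneg (by linarith) hden.le
    have hab : (lam * z - t) / (lam * z - z) + (t - z) / (lam * z - z) = 1 := by
      field_simp [(by linarith : (0:ℝ) < lam - 1).ne']
      ring
    have hcvx := (convexOn_rpow hp.le).2 (Set.mem_Ici.mpr hz.le)
      (Set.mem_Ici.mpr (by positivity : (0:ℝ) ≤ lam * z)) ha0 hb0 hab
    simp only [smul_eq_mul] at hcvx
    have hpt : (lam * z - t) / (lam * z - z) * z + (t - z) / (lam * z - z) * (lam * z) = t := by
      field_simp [(by linarith : (0:ℝ) < lam - 1).ne']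
      ring
    rw [hpt, Real.mul_rpow hlam0.le hz.le] at hcvx
    have hcl : t ^ p * (lam * z - z) ≤ (lam * z - t) * z ^ p + (t - z) * (lam ^ p * z ^ p) := by
      have h2 := mul_le_mul_of_nonneg_right hcvx hden.le
      calc t ^ p * (lam * z - z) ≤
          ((lam * z - t) / (lam * z - z) * z ^ p +
            (t - z) / (lam * z - z) * (lam ^ p * z ^ p)) * (lam * z - z) := h2
        _ = (lam * z - t) * z ^ p + (t - z) * (lam ^ p * z ^ p) := by
          field_simp [(by linarith : (0:ℝ) < lam - 1).ne']
    rw [htp]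
    have hmul : (0:ℝ) < (lam ^ p - lam) * z := by positivity
    have key : (z ^ p + c * t ^ p) * ((lam ^ p - lam) * z)
        ≤ (t ^ p + c * (t * z ^ (p - 1))) * ((lam ^ p - lam) * z) := by
      have hL : (z ^ p + c * t ^ p) * ((lam ^ p - lam) * z)
          = z ^ p * ((lam ^ p - lam) * z) + (lam ^ p - 1) * (t ^ p * z) := by
        linear_combination (t ^ p * z) * hcD
      have hR : (t ^ p + c * (t * z ^ (p - 1))) * ((lam ^ p - lam) * z)
          = t ^ p * ((lam ^ p - lam) * z) + (lam ^ p - 1) * (t * z ^ p) := by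
        linear_combination (t * z ^ (p - 1) * z) * hcD + (lam ^ p - 1) * t * hzp
      rw [hL, hR]
      nlinarith [hcl]
    exact le_of_mul_le_mul_right key hmul

/-- The main inequality for the Bellman function
`B(x,y,z) = z^p + c·(y − x z^{p−1})₊`, `c = (λ^p−1)/(λ^p−λ)`:
if weights `α_i ≥ 0` sum to `1`, `x = Σ α_i x_i`, `y = Σ α_i y_i`, `x_i ≤ λ x`,
`x ≤ z`, `z > 0`, then `B(x,y,z) ≤ Σ α_i B(x_i, y_i, max(x_i, z))`. -/
theorem stmt_8 (p lam : ℝ) (hp : 1 < p) (hlam : 1 < lam)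
    (c : ℝ) (hc : c = (lam ^ p - 1) / (lam ^ p - lam))
    (B : ℝ → ℝ → ℝ → ℝ)
    (hB : ∀ x y z, B x y z = z ^ p + c * max (y - x * z ^ (p - 1)) 0)
    (ι : Type*) (A : Finset ι) (α x y : ι → ℝ)
    (hα : ∀ i ∈ A, 0 ≤ α i) (hsum : ∑ i ∈ A, α i = 1)
    (hx : ∀ i ∈ A, 0 ≤ x i) (hy : ∀ i ∈ A, 0 ≤ y i)
    (z X Y : ℝ) (hz : 0 < z)
    (hX : X = ∑ i ∈ A, α i * x i) (hY : Y = ∑ i ∈ A, α i * y i)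
    (hxlam : ∀ i ∈ A, x i ≤ lam * X) (hXz : X ≤ z) :
    B X Y z ≤ ∑ i ∈ A, α i * B (x i) (y i) (max (x i) z) := by
  have hp0 : (0:ℝ) ≤ p := by linarith
  have hlam0 : (0:ℝ) < lam := by linarith
  have hlp : lam < lam ^ p := by
    have h := (Real.rpow_lt_rpow_left_iff hlam).2 hp
    rwa [Real.rpow_one] at h
  have hD : (0:ℝ) < lam ^ p - lam := by linarith
  have hc0 : 0 ≤ c := by rw [hc]; apply div_nonneg <;> linarith
  have hxl : ∀ i ∈ A, x i ≤ lam * z := fun i hi =>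
    le_trans (hxlam i hi) (by nlinarith)
  have hB1 : ∀ i ∈ A, z ^ p ≤ B (x i) (y i) (max (x i) z) := by
    intro i hi
    rw [hB]
    have h1 : z ^ p ≤ (max (x i) z) ^ p :=
      Real.rpow_le_rpow hz.le (le_max_right _ _) hp0
    have h2 : (0:ℝ) ≤ max (y i - x i * (max (x i) z) ^ (p - 1)) 0 := le_max_right _ _
    nlinarith [mul_nonneg hc0 h2]
  have hB2 : ∀ i ∈ A, z ^ p + c * (y i - x i * z ^ (p - 1)) ≤ B (x i) (y i) (max (x i) z) := by
    intro i hi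
    rw [hB]
    have hk := key_pt p lam hp hlam z (x i) hz (hx i hi) (hxl i hi)
    rw [← hc] at hk
    have h2 : y i - x i * (max (x i) z) ^ (p - 1)
        ≤ max (y i - x i * (max (x i) z) ^ (p - 1)) 0 := le_max_left _ _
    have h3 := mul_le_mul_of_nonneg_left h2 hc0
    nlinarith [hk, h3]
  have hS1 : z ^ p ≤ ∑ i ∈ A, α i * B (x i) (y i) (max (x i) z) := by
    calc z ^ p = ∑ i ∈ A, α i * z ^ p := by rw [← Finset.sum_mul, hsum, one_mul]
    _ ≤ _ := Finset.sum_le_sum (fun i hi => mul_le_mul_of_nonneg_left (hB1 i hi) (hα i hi))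
  have hS2 : z ^ p + c * (Y - X * z ^ (p - 1))
      ≤ ∑ i ∈ A, α i * B (x i) (y i) (max (x i) z) := by
    calc z ^ p + c * (Y - X * z ^ (p - 1))
        = (∑ i ∈ A, α i) * z ^ p + c * (∑ i ∈ A, α i * y i)
            - (c * z ^ (p - 1)) * (∑ i ∈ A, α i * x i) := by
          rw [hsum, ← hX, ← hY]; ring
      _ = ∑ i ∈ A, (α i * z ^ p + c * (α i * y i) - (c * z ^ (p - 1)) * (α i * x i)) := by
          rw [Finset.sum_sub_distrib, Finset.sum_add_distrib, Finset.sum_mul,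
            Finset.mul_sum, Finset.mul_sum]
      _ = ∑ i ∈ A, α i * (z ^ p + c * (y i - x i * z ^ (p - 1))) :=
          Finset.sum_congr rfl (fun i _ => by ring)
      _ ≤ _ := Finset.sum_le_sum (fun i hi => mul_le_mul_of_nonneg_left (hB2 i hi) (hα i hi))
  rw [hB]
  have hmax : c * max (Y - X * z ^ (p - 1)) 0 = max (c * (Y - X * z ^ (p - 1))) 0 := by
    rw [mul_max_of_nonneg _ _ hc0, mul_zero]
  rw [hmax, ← max_add_add_left]
  exact max_le hS2 (by simpa using hS1)
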